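/- Let u : ℝ → ℝ be five times continuously differentiable in a neighborhood of a point x. Define, for h > 0: β₁(h) = (u(x+h) − u(x))², β₂(h) = (u(x) − u(x−h))², β₃(h) = (13/12)(u(x) − 2u(x−h) + u(x−2h))² + (1/4)(5u(x) − 8u(x−h) + 3u(x−2h))², and τ(h) = (u(x+h) − 3u(x) + 3u(x−h) − u(x−2h))². Then as h → 0⁺: β₁(h) = u'(x)²h² + u'(x)u''(x)h³ + ((1/4)u''(x)² + (1/3)u'(x)u'''(x))h⁴ + O(h⁵); β₂(h) = u'(x)²h² − u'(x)u''(x)h³ + ((1/4)u''(x)² + (1/3)u'(x)u'''(x))h⁴ + O(h⁵); β₃(h) = u'(x)²h² + 2u'(x)u''(x)h³ + ((25/12)u''(x)² − (32/12)u'(x)u'''(x))h⁴ + O(h⁵); and τ(h) = u'''(x)²h⁶ + O(h⁷). -/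

import Mathlib

open Asymptotics Topology

open Filter

private lemma sum_taylor_at_zero (m : ℕ) (c : ℕ → ℝ) :
    ∑ k ∈ Finset.range (m + 1), (0:ℝ) ^ k / k.factorial * c k = c 0 := by
  rw [Finset.sum_eq_single_of_mem 0 (Finset.mem_range.2 (Nat.succ_pos m))]
  · simp
  · intro k _ hk
    simp [zero_pow hk]

private lemma peano : ∀ (n : ℕ) (f : ℝ → ℝ) (x : ℝ), ContDiffAt ℝ n f x →
    (fun h : ℝ => f (x + h) - ∑ k ∈ Finset.range (n + 1),
        h ^ k / k.factorial * iteratedDeriv k f x)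
      =o[𝓝[≠] (0:ℝ)] fun h => h ^ n := by
  intro n
  induction n with
  | zero =>
    intro f x hf
    have h1 : Tendsto (fun h : ℝ => x + h) (𝓝 (0:ℝ)) (𝓝 x) := by
      simpa using (tendsto_const_nhds.add tendsto_id :
        Tendsto (fun h : ℝ => x + h) (𝓝 0) (𝓝 (x + 0)))
    have h0 : Tendsto (fun h : ℝ => f (x + h) - f x) (𝓝 (0:ℝ)) (𝓝 0) := by
      have h2 := (hf.continuousAt.tendsto.comp h1).sub
        (tendsto_const_nhds : Tendsto (fun _ : ℝ => f x) (𝓝 0) (𝓝 (f x)))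
      simpa using h2
    have h3 : (fun h : ℝ => f (x + h) - f x) =o[𝓝[≠] (0:ℝ)] (fun _ => (1:ℝ)) :=
      (isLittleO_one_iff ℝ).2 (h0.mono_left nhdsWithin_le_nhds)
    simpa [Finset.sum_range_one, iteratedDeriv_zero] using h3
  | succ n ih =>
    intro f x hf
    have hfd : ContDiffAt ℝ n (deriv f) x := by
      have h1 : ContDiffAt ℝ n (fderiv ℝ f) x := hf.fderiv_right (by exact_mod_cast le_refl (n+1))
      have h2 : ContDiffAt ℝ n (fun y => fderiv ℝ f y 1) x := h1.clm_apply contDiffAt_const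
      have h3 : (fun y => fderiv ℝ f y 1) = deriv f := funext fun y => fderiv_apply_one_eq_deriv
      rwa [h3] at h2
    have ihd := ih (deriv f) x hfd
    have hev : ∀ᶠ y in 𝓝 x, DifferentiableAt ℝ f y := by
      filter_upwards [hf.eventually (by simp)] with y hy
      exact hy.differentiableAt (by simp)
    have hmap : Tendsto (fun h : ℝ => x + h) (𝓝 (0:ℝ)) (𝓝 x) := by
      simpa using (tendsto_const_nhds.add tendsto_id :
        Tendsto (fun h : ℝ => x + h) (𝓝 0) (𝓝 (x + 0)))
    have hev2 : ∀ᶠ h in 𝓝 (0:ℝ), DifferentiableAt ℝ f (x + h) := hmap.eventually hev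
    set R : ℝ → ℝ := fun h => f (x + h) - ∑ k ∈ Finset.range (n + 1 + 1),
        h ^ k / k.factorial * iteratedDeriv k f x with hRdef
    set R' : ℝ → ℝ := fun h => deriv f (x + h) - ∑ k ∈ Finset.range (n + 1),
        h ^ k / k.factorial * iteratedDeriv k (deriv f) x with hR'def
    have hderiv : ∀ᶠ h in 𝓝 (0:ℝ), HasDerivAt R (R' h) h := by
      filter_upwards [hev2] with h hh
      have h1 : HasDerivAt (fun t : ℝ => f (x + t)) (deriv f (x + h)) h := by
        have := (hh.hasDerivAt).comp h ((hasDerivAt_id h).const_add x)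
        simpa [Function.comp_def] using this
      have h2 : HasDerivAt (fun t : ℝ => ∑ k ∈ Finset.range (n + 1 + 1),
          t ^ k / k.factorial * iteratedDeriv k f x)
          (∑ k ∈ Finset.range (n + 1 + 1),
            (k : ℝ) * h ^ (k - 1) / k.factorial * iteratedDeriv k f x) h := by
        apply HasDerivAt.fun_sum
        intro k _
        exact ((hasDerivAt_pow k h).div_const (k.factorial : ℝ)).mul_const (iteratedDeriv k f x)
      have h3 : ∑ k ∈ Finset.range (n + 1 + 1),
            (k : ℝ) * h ^ (k - 1) / k.factorial * iteratedDeriv k f x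
          = ∑ k ∈ Finset.range (n + 1),
            h ^ k / k.factorial * iteratedDeriv k (deriv f) x := by
        rw [Finset.sum_range_succ']
        simp only [Nat.cast_zero, zero_mul, zero_div, add_zero]
        refine Finset.sum_congr rfl fun k _ => ?_
        rw [← iteratedDeriv_succ']
        have hk : (((k+1).factorial : ℕ) : ℝ) = ((k:ℝ)+1) * (k.factorial : ℝ) := by
          push_cast [Nat.factorial_succ]; ring
        rw [Nat.add_sub_cancel, hk]
        have hne : ((k.factorial : ℕ) : ℝ) ≠ 0 := Nat.cast_ne_zero.2 k.factorial_ne_zero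
        have hne2 : ((k:ℝ)+1) ≠ 0 := by positivity
        push_cast
        field_simp
      have h6 : R' h = deriv f (x + h) - ∑ k ∈ Finset.range (n + 1 + 1),
          (k : ℝ) * h ^ (k - 1) / k.factorial * iteratedDeriv k f x := by
        simp only [hR'def]
        rw [h3]
      rw [h6]
      exact h1.sub h2
    have hgg' : ∀ᶠ h in 𝓝[≠] (0:ℝ),
        HasDerivAt (fun t : ℝ => t ^ (n + 1)) (((n:ℝ) + 1) * h ^ n) h := by
      refine Eventually.of_forall fun h => ?_
      have := hasDerivAt_pow (n+1) h
      simpa using this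
    have hg' : ∀ᶠ h in 𝓝[≠] (0:ℝ), ((n:ℝ) + 1) * h ^ n ≠ 0 := by
      filter_upwards [self_mem_nhdsWithin] with h hh
      have hh0 : h ≠ 0 := hh
      exact mul_ne_zero (by positivity) (pow_ne_zero _ hh0)
    have hR0 : R 0 = 0 := by
      have := sum_taylor_at_zero (n + 1) (fun k => iteratedDeriv k f x)
      simp only [hRdef, add_zero, this, iteratedDeriv_zero, sub_self]
    have hRc : Tendsto R (𝓝 (0:ℝ)) (𝓝 0) := by
      have hc : ContinuousAt R 0 := by
        apply ContinuousAt.sub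
        · exact ContinuousAt.comp (by simpa using hf.continuousAt)
            ((continuous_const.add continuous_id).continuousAt)
        · exact (continuous_finset_sum _ fun k _ =>
            ((continuous_pow k).div_const _).mul continuous_const).continuousAt
      simpa [hR0] using hc.tendsto
    have hdiv : Tendsto (fun h => R' h / (((n:ℝ) + 1) * h ^ n)) (𝓝[≠] (0:ℝ)) (𝓝 0) := by
      have h1 := ihd.tendsto_div_nhds_zero
      have h2 := h1.div_const ((n:ℝ) + 1)
      rw [zero_div] at h2
      refine Tendsto.congr (fun h => ?_) h2
      rw [div_div, mul_comm]
    have hRfin : Tendsto (fun h => R h / h ^ (n + 1)) (𝓝[≠] (0:ℝ)) (𝓝 0) := by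
      apply HasDerivAt.lhopital_zero_nhdsNE (hderiv.filter_mono nhdsWithin_le_nhds) hgg' hg'
        (hRc.mono_left nhdsWithin_le_nhds)
      · have : Tendsto (fun h : ℝ => h ^ (n+1)) (𝓝 0) (𝓝 ((0:ℝ) ^ (n+1))) :=
          (continuous_pow (n+1)).tendsto 0
        simpa [zero_pow (Nat.succ_ne_zero n)] using this.mono_left nhdsWithin_le_nhds
      · exact hdiv
    rw [isLittleO_iff_tendsto']
    · exact hRfin
    · filter_upwards [self_mem_nhdsWithin] with h hh hcon
      exact absurd (pow_eq_zero_iff (Nat.succ_ne_zero n) |>.1 hcon) hh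
private lemma pow_bigO (m p : ℕ) (hpm : p ≤ m) :
    (fun h : ℝ => h ^ m) =O[𝓝[≠] (0:ℝ)] fun h => h ^ p := by
  have h1 : Tendsto (fun h : ℝ => h ^ (m - p)) (𝓝[≠] (0:ℝ)) (𝓝 ((0:ℝ) ^ (m - p))) :=
    ((continuous_pow (m - p)).tendsto 0).mono_left nhdsWithin_le_nhds
  have h2 := (h1.isBigO_one ℝ).mul (isBigO_refl (fun h : ℝ => h ^ p) _)
  refine h2.congr' (Eventually.of_forall fun h => ?_) (Eventually.of_forall fun h => one_mul _)
  show h ^ (m - p) * h ^ p = h ^ m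
  rw [← pow_add, Nat.sub_add_cancel hpm]

private lemma mono_bigO (c : ℝ) (m p : ℕ) (hpm : p ≤ m) :
    (fun h : ℝ => c * h ^ m) =O[𝓝[≠] (0:ℝ)] fun h : ℝ => h ^ p :=
  (pow_bigO m p hpm).const_mul_left c

private lemma aux1 (d1 d2 d3 d4 : ℝ) (E f : ℝ → ℝ)
    (hE : E =o[𝓝[≠] (0:ℝ)] fun h => h ^ 4)
    (hf : ∀ h, f h = d1*h + d2/2*h^2 + d3/6*h^3 + d4/24*h^4 + E h) :
    (fun h : ℝ => (f h)^2 - (d1^2*h^2 + d1*d2*h^3 + ((1/4)*d2^2 + (1/3)*d1*d3)*h^4))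
      =O[𝓝[≠] (0:ℝ)] fun h => h ^ 5 := by
  have he : E =O[𝓝[≠] (0:ℝ)] fun h => h ^ 4 := hE.isBigO
  have hlin : (fun h : ℝ => 2*(d1*h + d2/2*h^2 + d3/6*h^3 + d4/24*h^4) + E h)
      =O[𝓝[≠] (0:ℝ)] fun h => h ^ 1 := by
    have a1 := ((((mono_bigO (2*d1) 1 1 le_rfl).add (mono_bigO d2 2 1 (by norm_num))).add
      (mono_bigO (d3/3) 3 1 (by norm_num))).add (mono_bigO (d4/12) 4 1 (by norm_num))).add
      (he.trans (pow_bigO 4 1 (by norm_num)))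
    exact a1.congr' (Eventually.of_forall fun h => by (try simp only []); (try ring)) EventuallyEq.rfl
  have hcross : (fun h : ℝ => (2*(d1*h + d2/2*h^2 + d3/6*h^3 + d4/24*h^4) + E h) * E h)
      =O[𝓝[≠] (0:ℝ)] fun h => h ^ 5 :=
    (hlin.mul he).congr' EventuallyEq.rfl (Eventually.of_forall fun h => by (try simp only []); (try ring))
  have hpoly := (((mono_bigO (1/6*d2*d3 + 1/12*d1*d4) 5 5 le_rfl).add
    (mono_bigO (1/36*d3^2 + 1/24*d2*d4) 6 5 (by norm_num))).add
    (mono_bigO (1/72*d3*d4) 7 5 (by norm_num))).add (mono_bigO (1/576*d4^2) 8 5 (by norm_num))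
  refine (hpoly.add hcross).congr' (Eventually.of_forall fun h => ?_) EventuallyEq.rfl
  simp only [hf]; ring

private lemma aux3 (d1 d2 d3 d4 : ℝ) (eA eB A B : ℝ → ℝ)
    (heA : eA =o[𝓝[≠] (0:ℝ)] fun h => h ^ 4)
    (heB : eB =o[𝓝[≠] (0:ℝ)] fun h => h ^ 4)
    (hA : ∀ h, A h = d2*h^2 - d3*h^3 + 7/12*d4*h^4 + eA h)
    (hB : ∀ h, B h = 2*d1*h + 2*d2*h^2 - 8/3*d3*h^3 + 5/3*d4*h^4 + eB h) :
    (fun h : ℝ => ((13/12) * (A h)^2 + (1/4) * (B h)^2)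
        - (d1^2*h^2 + 2*d1*d2*h^3 + ((25/12)*d2^2 - (32/12)*d1*d3)*h^4))
      =O[𝓝[≠] (0:ℝ)] fun h => h ^ 5 := by
  have heAO : eA =O[𝓝[≠] (0:ℝ)] fun h => h ^ 4 := heA.isBigO
  have heBO : eB =O[𝓝[≠] (0:ℝ)] fun h => h ^ 4 := heB.isBigO
  have hlinA : (fun h : ℝ => 13/12*(2*(d2*h^2 - d3*h^3 + 7/12*d4*h^4) + eA h))
      =O[𝓝[≠] (0:ℝ)] fun h => h ^ 1 := by
    have a1 := (((mono_bigO (13/6*d2) 2 1 (by norm_num)).add (mono_bigO (-13/6*d3) 3 1 (by norm_num))).add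
      (mono_bigO (91/72*d4) 4 1 (by norm_num))).add
      ((heAO.trans (pow_bigO 4 1 (by norm_num))).const_mul_left (13/12))
    exact a1.congr' (Eventually.of_forall fun h => by (try simp only []); (try ring)) EventuallyEq.rfl
  have hcrossA : (fun h : ℝ => 13/12*(2*(d2*h^2 - d3*h^3 + 7/12*d4*h^4) + eA h) * eA h)
      =O[𝓝[≠] (0:ℝ)] fun h => h ^ 5 :=
    (hlinA.mul heAO).congr' EventuallyEq.rfl (Eventually.of_forall fun h => by (try simp only []); (try ring))
  have hlinB : (fun h : ℝ => 1/4*(2*(2*d1*h + 2*d2*h^2 - 8/3*d3*h^3 + 5/3*d4*h^4) + eB h))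
      =O[𝓝[≠] (0:ℝ)] fun h => h ^ 1 := by
    have a1 := ((((mono_bigO d1 1 1 le_rfl).add (mono_bigO d2 2 1 (by norm_num))).add
      (mono_bigO (-4/3*d3) 3 1 (by norm_num))).add (mono_bigO (5/6*d4) 4 1 (by norm_num))).add
      ((heBO.trans (pow_bigO 4 1 (by norm_num))).const_mul_left (1/4))
    exact a1.congr' (Eventually.of_forall fun h => by (try simp only []); (try ring)) EventuallyEq.rfl
  have hcrossB : (fun h : ℝ => 1/4*(2*(2*d1*h + 2*d2*h^2 - 8/3*d3*h^3 + 5/3*d4*h^4) + eB h) * eB h)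
      =O[𝓝[≠] (0:ℝ)] fun h => h ^ 5 :=
    (hlinB.mul heBO).congr' EventuallyEq.rfl (Eventually.of_forall fun h => by (try simp only []); (try ring))
  have hpoly := (((mono_bigO (-29/6*d2*d3 + 5/3*d1*d4) 5 5 le_rfl).add
    (mono_bigO (103/36*d3^2 + 211/72*d2*d4) 6 5 (by norm_num))).add
    (mono_bigO (-251/72*d3*d4) 7 5 (by norm_num))).add (mono_bigO (1837/1728*d4^2) 8 5 (by norm_num))
  refine ((hpoly.add hcrossA).add hcrossB).congr'
    (Eventually.of_forall fun h => ?_) EventuallyEq.rfl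
  simp only [hA, hB]; ring

private lemma aux4 (d3 d4 : ℝ) (eD D : ℝ → ℝ)
    (heD : eD =o[𝓝[≠] (0:ℝ)] fun h => h ^ 4)
    (hD : ∀ h, D h = d3*h^3 - 1/2*d4*h^4 + eD h) :
    (fun h : ℝ => (D h)^2 - d3^2*h^6) =O[𝓝[≠] (0:ℝ)] fun h => h ^ 7 := by
  have heO : eD =O[𝓝[≠] (0:ℝ)] fun h => h ^ 4 := heD.isBigO
  have hlin : (fun h : ℝ => 2*(d3*h^3 - 1/2*d4*h^4) + eD h)
      =O[𝓝[≠] (0:ℝ)] fun h => h ^ 3 := by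
    have a1 := ((mono_bigO (2*d3) 3 3 le_rfl).add (mono_bigO (-d4) 4 3 (by norm_num))).add
      (heO.trans (pow_bigO 4 3 (by norm_num)))
    exact a1.congr' (Eventually.of_forall fun h => by (try simp only []); (try ring)) EventuallyEq.rfl
  have hcross : (fun h : ℝ => (2*(d3*h^3 - 1/2*d4*h^4) + eD h) * eD h)
      =O[𝓝[≠] (0:ℝ)] fun h => h ^ 7 :=
    (hlin.mul heO).congr' EventuallyEq.rfl (Eventually.of_forall fun h => by (try simp only []); (try ring))
  have hpoly := (mono_bigO (-(d3*d4)) 7 7 le_rfl).add (mono_bigO (1/4*d4^2) 8 7 (by norm_num))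
  refine (hpoly.add hcross).congr' (Eventually.of_forall fun h => ?_) EventuallyEq.rfl
  simp only [hD]; ring

/-- Taylor expansions of the WENO smoothness indicators `β₁, β₂, β₃` and the
global indicator `τ` of the fourth order upwind SBP-WENO scheme at a point
where `u` is five times continuously differentiable. -/
theorem stmt_17 (u : ℝ → ℝ) (x : ℝ) (hu : ContDiffAt ℝ 5 u x) :
    ((fun h : ℝ => (u (x+h) - u x)^2
        - ((deriv u x)^2 * h^2 + deriv u x * iteratedDeriv 2 u x * h^3
          + ((1/4) * (iteratedDeriv 2 u x)^2
             + (1/3) * deriv u x * iteratedDeriv 3 u x) * h^4))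
      =O[𝓝[>] (0:ℝ)] fun h => h^5) ∧
    ((fun h : ℝ => (u x - u (x-h))^2
        - ((deriv u x)^2 * h^2 - deriv u x * iteratedDeriv 2 u x * h^3
          + ((1/4) * (iteratedDeriv 2 u x)^2
             + (1/3) * deriv u x * iteratedDeriv 3 u x) * h^4))
      =O[𝓝[>] (0:ℝ)] fun h => h^5) ∧
    ((fun h : ℝ => ((13/12) * (u x - 2*u (x-h) + u (x-2*h))^2
          + (1/4) * (5*u x - 8*u (x-h) + 3*u (x-2*h))^2)
        - ((deriv u x)^2 * h^2 + 2 * deriv u x * iteratedDeriv 2 u x * h^3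
          + ((25/12) * (iteratedDeriv 2 u x)^2
             - (32/12) * deriv u x * iteratedDeriv 3 u x) * h^4))
      =O[𝓝[>] (0:ℝ)] fun h => h^5) ∧
    ((fun h : ℝ => (u (x+h) - 3*u x + 3*u (x-h) - u (x-2*h))^2
        - (iteratedDeriv 3 u x)^2 * h^6)
      =O[𝓝[>] (0:ℝ)] fun h => h^7) := by
  have hu4 : ContDiffAt ℝ 4 u x := hu.of_le (by norm_num)
  have hP := peano 4 u x hu4
  have hsum : (fun h : ℝ => u (x + h) - ∑ k ∈ Finset.range (4 + 1),
      h ^ k / k.factorial * iteratedDeriv k u x)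
      = fun h : ℝ => u (x + h) - (u x + deriv u x * h + iteratedDeriv 2 u x / 2 * h ^ 2
        + iteratedDeriv 3 u x / 6 * h ^ 3 + iteratedDeriv 4 u x / 24 * h ^ 4) := by
    funext h
    simp [Finset.sum_range_succ, iteratedDeriv_zero, iteratedDeriv_one, Nat.factorial]
    ring
  rw [hsum] at hP
  set d1 := deriv u x with hd1
  set d2 := iteratedDeriv 2 u x with hd2
  set d3 := iteratedDeriv 3 u x with hd3
  set d4 := iteratedDeriv 4 u x with hd4
  obtain ⟨E, hEo, hEeq⟩ : ∃ E : ℝ → ℝ, (E =o[𝓝[≠] (0:ℝ)] fun h => h ^ 4) ∧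
      ∀ h, u (x + h) = u x + d1*h + d2/2*h^2 + d3/6*h^3 + d4/24*h^4 + E h :=
    ⟨_, hP, fun h => by (try simp only []); (try ring)⟩
  have hneg : Tendsto (fun h : ℝ => -h) (𝓝[≠] (0:ℝ)) (𝓝[≠] (0:ℝ)) := by
    refine tendsto_nhdsWithin_iff.2 ⟨?_, ?_⟩
    · simpa using (continuous_neg.tendsto (0:ℝ)).mono_left nhdsWithin_le_nhds
    · filter_upwards [self_mem_nhdsWithin] with h hh
      simpa using neg_ne_zero.2 hh
  have hneg2 : Tendsto (fun h : ℝ => -(2*h)) (𝓝[≠] (0:ℝ)) (𝓝[≠] (0:ℝ)) := by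
    refine tendsto_nhdsWithin_iff.2 ⟨?_, ?_⟩
    · have : Tendsto (fun h : ℝ => -(2*h)) (𝓝 (0:ℝ)) (𝓝 (-(2*0))) :=
        ((continuous_const.mul continuous_id).neg).tendsto 0
      simpa using this.mono_left nhdsWithin_le_nhds
    · filter_upwards [self_mem_nhdsWithin] with h hh
      have : h ≠ 0 := hh
      simpa using this
  have hEn : (fun h : ℝ => E (-h)) =o[𝓝[≠] (0:ℝ)] fun h => h ^ 4 := by
    have := hEo.comp_tendsto hneg
    exact this.congr' (Eventually.of_forall fun h => rfl)
      (Eventually.of_forall fun h => by simp [Function.comp]; ring)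
  have hEn2 : (fun h : ℝ => E (-(2*h))) =o[𝓝[≠] (0:ℝ)] fun h => h ^ 4 := by
    have h1 := hEo.comp_tendsto hneg2
    have h2 : (fun h : ℝ => E (-(2*h))) =o[𝓝[≠] (0:ℝ)] fun h => 16 * h ^ 4 :=
      h1.congr' (Eventually.of_forall fun h => rfl)
        (Eventually.of_forall fun h => by simp [Function.comp]; ring)
    exact h2.trans_isBigO (isBigO_const_mul_self 16 _ _)
  have hx2 : ∀ h : ℝ, u (x - h) = u x - d1*h + d2/2*h^2 - d3/6*h^3 + d4/24*h^4 + E (-h) := by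
    intro h
    have h1 := hEeq (-h)
    rw [show x + -h = x - h from by ring] at h1
    rw [h1]; ring
  have hx3 : ∀ h : ℝ, u (x - 2*h)
      = u x - 2*d1*h + 2*d2*h^2 - 4/3*d3*h^3 + 2/3*d4*h^4 + E (-(2*h)) := by
    intro h
    have h1 := hEeq (-(2*h))
    rw [show x + -(2*h) = x - 2*h from by ring] at h1
    rw [h1]; ring
  have hl : 𝓝[>] (0:ℝ) ≤ 𝓝[≠] (0:ℝ) := by
    apply nhdsWithin_mono
    intro h hh
    simpa using ne_of_gt hh
  refine ⟨?_, ?_, ?_, ?_⟩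
  · have := aux1 d1 d2 d3 d4 E (fun h => u (x+h) - u x) hEo
      (fun h => by rw [hEeq h]; ring)
    exact ((this.mono hl).congr' (Eventually.of_forall fun h => by (try simp only []); (try ring)) EventuallyEq.rfl)
  · have := aux1 d1 (-d2) d3 (-d4) (fun h => -E (-h)) (fun h => u x - u (x-h)) hEn.neg_left
      (fun h => by rw [hx2 h]; ring)
    exact ((this.mono hl).congr' (Eventually.of_forall fun h => by (try simp only []); (try ring)) EventuallyEq.rfl)
  · have heA : (fun h : ℝ => -2*E (-h) + E (-(2*h))) =o[𝓝[≠] (0:ℝ)] fun h => h ^ 4 :=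
      (hEn.const_mul_left (-2)).add hEn2
    have heB : (fun h : ℝ => -8*E (-h) + 3*E (-(2*h))) =o[𝓝[≠] (0:ℝ)] fun h => h ^ 4 :=
      (hEn.const_mul_left (-8)).add (hEn2.const_mul_left 3)
    have := aux3 d1 d2 d3 d4 _ _ (fun h => u x - 2*u (x-h) + u (x-2*h))
      (fun h => 5*u x - 8*u (x-h) + 3*u (x-2*h)) heA heB
      (fun h => by rw [hx2 h, hx3 h]; ring) (fun h => by rw [hx2 h, hx3 h]; ring)
    exact ((this.mono hl).congr' (Eventually.of_forall fun h => by (try simp only []); (try ring)) EventuallyEq.rfl)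
  · have heD : (fun h : ℝ => E h + 3*E (-h) - E (-(2*h))) =o[𝓝[≠] (0:ℝ)] fun h => h ^ 4 :=
      (hEo.add (hEn.const_mul_left 3)).sub hEn2
    have := aux4 d3 d4 _ (fun h => u (x+h) - 3*u x + 3*u (x-h) - u (x-2*h)) heD
      (fun h => by rw [hEeq h, hx2 h, hx3 h]; ring)
    exact ((this.mono hl).congr' (Eventually.of_forall fun h => by (try simp only []); (try ring)) EventuallyEq.rfl)
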